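/- Let A ∈ ℝ^{m×n} preserve Chebyshev systems and let v ∈ ℝⁿ be Chebyshev with u = φ(A,v). If ‖A - u vᵀ‖_C = E(A,v), i.e., the first step of alternating minimization already attains the limit error, then the triple (A, u, v) admits a two-dimensional alternance. -/
import Mathlib


open Filter

/-- A vector is Chebyshev if all of its components are non-zero. -/
def Cheb {n : ℕ} (v : Fin n → ℝ) : Prop := ∀ i, v i ≠ 0

/-- `mu a v` is the (unique, when `v` is Chebyshev) minimizer of `u ↦ ‖a - u • v‖`,
where `‖·‖` is the sup-norm on `Fin n → ℝ`. -/
noncomputable def mu {n : ℕ} (a v : Fin n → ℝ) : ℝ :=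
  Classical.epsilon fun t : ℝ => ∀ u : ℝ, ‖a - t • v‖ ≤ ‖a - u • v‖

noncomputable def phi {m n : ℕ} (A : Fin m → Fin n → ℝ) (v : Fin n → ℝ) : Fin m → ℝ :=
  fun i => mu (A i) v

noncomputable def psi {m n : ℕ} (A : Fin m → Fin n → ℝ) (u : Fin m → ℝ) : Fin n → ℝ :=
  fun j => mu (fun i => A i j) u

/-- `A` preserves Chebyshev systems. -/
def PreservesCheb {m n : ℕ} (A : Fin m → Fin n → ℝ) : Prop :=
  (∀ v : Fin n → ℝ, Cheb v → Cheb (phi A v)) ∧ (∀ u : Fin m → ℝ, Cheb u → Cheb (psi A u))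

/-- A vector is alternance-free if exactly one component attains the max absolute value. -/
def AlternanceFree {n : ℕ} (a : Fin n → ℝ) : Prop := ∃! i, |a i| = ‖a‖

/-- Chebyshev norm of the residual `A - u vᵀ`. -/
noncomputable def Cerr {m n : ℕ} (A : Fin m → Fin n → ℝ) (u : Fin m → ℝ) (v : Fin n → ℝ) : ℝ :=
  ⨆ i, ⨆ j, |A i j - u i * v j|

/-- Chebyshev norm of a matrix. -/
noncomputable def CnormM {m n : ℕ} (A : Fin m → Fin n → ℝ) : ℝ :=
  ⨆ i, ⨆ j, |A i j|

/-- The sequence `v⁽ᵏ⁾` of the alternating minimization method started at `v0`. -/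
noncomputable def vseq {m n : ℕ} (A : Fin m → Fin n → ℝ) (v0 : Fin n → ℝ) : ℕ → Fin n → ℝ
  | 0 => v0
  | k + 1 => psi A (phi A (vseq A v0 k))

/-- The set of positions where the residual attains its maximum absolute value. -/
noncomputable def TSet {m n : ℕ} (A : Fin m → Fin n → ℝ) (u : Fin m → ℝ) (v : Fin n → ℝ) :
    Set (Fin m × Fin n) :=
  {p | |A p.1 p.2 - u p.1 * v p.2| = Cerr A u v}

/-- The set of columns containing a maximal-residual position. -/
noncomputable def CSet {m n : ℕ} (A : Fin m → Fin n → ℝ) (u : Fin m → ℝ) (v : Fin n → ℝ) :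
    Set (Fin n) :=
  {j | ∃ i, (i, j) ∈ TSet A u v}

/-- The sign quantity τ_{ij}(A,u,v) = sign(uᵢ vⱼ (a_{ij} - uᵢ vⱼ)). -/
noncomputable def tau {m n : ℕ} (A : Fin m → Fin n → ℝ) (u : Fin m → ℝ) (v : Fin n → ℝ)
    (i : Fin m) (j : Fin n) : ℝ :=
  Real.sign (u i * v j * (A i j - u i * v j))

section OneDim

variable {N : ℕ}

lemma abs_apply_le_norm (x : Fin N → ℝ) (j : Fin N) : |x j| ≤ ‖x‖ := by
  simpa using norm_le_pi_norm x j

lemma norm_le_of_forall_abs [Nonempty (Fin N)] (x : Fin N → ℝ) (B : ℝ) (hB : 0 ≤ B)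
    (h : ∀ j, |x j| ≤ B) : ‖x‖ ≤ B := by
  rw [pi_norm_le_iff_of_nonneg hB]; simpa using h

lemma exists_abs_eq_norm [Nonempty (Fin N)] (x : Fin N → ℝ) :
    ∃ j, |x j| = ‖x‖ := by
  obtain ⟨j, hj⟩ := Finite.exists_max fun j => |x j|
  exact ⟨j, le_antisymm (abs_apply_le_norm x j)
    (norm_le_of_forall_abs x |x j| (abs_nonneg _) hj)⟩

lemma sub_smul_apply (b w : Fin N → ℝ) (t : ℝ) (j : Fin N) :
    (b - t • w) j = b j - t * w j := by simp

end OneDim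

section OneDim2

variable {N : ℕ}

lemma exists_min_smul (b w : Fin N → ℝ) (j0 : Fin N) (hw : w j0 ≠ 0) :
    ∃ t : ℝ, ∀ s : ℝ, ‖b - t • w‖ ≤ ‖b - s • w‖ := by
  have hw0 : 0 < |w j0| := abs_pos.mpr hw
  obtain ⟨R, hRpos, hRbig⟩ : ∃ R : ℝ, 0 < R ∧ ‖b‖ + |b j0| < R * |w j0| := by
    refine ⟨(‖b‖ + |b j0|) / |w j0| + 1, by positivity, ?_⟩
    rw [add_mul, div_mul_cancel₀ _ (ne_of_gt hw0)]
    nlinarith [norm_nonneg b, abs_nonneg (b j0)]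
  have hcont : ContinuousOn (fun t : ℝ => ‖b - t • w‖) (Set.Icc (-R) R) := by
    fun_prop
  obtain ⟨t, ht, htmin⟩ := (isCompact_Icc (a := -R) (b := R)).exists_isMinOn
    ⟨0, by constructor <;> simp [hRpos.le, neg_nonpos.mpr hRpos.le]⟩ hcont
  refine ⟨t, fun s => ?_⟩
  by_cases hs : s ∈ Set.Icc (-R) R
  · exact htmin hs
  · have hsR : R ≤ |s| := by
      rcases abs_cases s with ⟨h1, h2⟩ | ⟨h1, h2⟩ <;>
        simp only [Set.mem_Icc, not_and_or, not_le] at hs <;> rcases hs with h | h <;> linarith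
    have h1 : ‖b‖ < ‖b - s • w‖ := by
      have h2 : |b j0 - s * w j0| ≤ ‖b - s • w‖ := by
        simpa using abs_apply_le_norm (b - s • w) j0
      have h3 : |s * w j0| - |b j0| ≤ |b j0 - s * w j0| := by
        have h := abs_sub_abs_le_abs_sub (s * w j0) (b j0)
        have h4 : |s * w j0 - b j0| = |b j0 - s * w j0| := abs_sub_comm _ _
        linarith
      have h5 : |s * w j0| = |s| * |w j0| := abs_mul _ _
      have h7 : ‖b‖ + |b j0| < |s| * |w j0| := by nlinarith
      linarith
    have h0 : ‖b - t • w‖ ≤ ‖b‖ := by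
      have := htmin (⟨neg_nonpos.mpr hRpos.le, hRpos.le⟩ : (0:ℝ) ∈ Set.Icc (-R) R)
      simpa using this
    linarith

lemma mu_isMin [Nonempty (Fin N)] (b w : Fin N → ℝ) (hw : Cheb w) :
    ∀ s : ℝ, ‖b - mu b w • w‖ ≤ ‖b - s • w‖ := by
  have h := exists_min_smul b w (Classical.arbitrary _) (hw _)
  exact Classical.epsilon_spec h

lemma min_unique [Nonempty (Fin N)] (b w : Fin N → ℝ) (hw : Cheb w) (t1 t2 : ℝ)
    (h1 : ∀ s : ℝ, ‖b - t1 • w‖ ≤ ‖b - s • w‖)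
    (h2 : ∀ s : ℝ, ‖b - t2 • w‖ ≤ ‖b - s • w‖) : t1 = t2 := by
  set M := ‖b - t1 • w‖ with hM
  have hM2 : ‖b - t2 • w‖ = M := le_antisymm (h2 t1) (h1 t2)
  have hMnn : 0 ≤ M := norm_nonneg _
  set tm : ℝ := (t1 + t2) / 2 with htm
  have ha1 : ∀ j, |b j - t1 * w j| ≤ M := fun j => by
    simpa using abs_apply_le_norm (b - t1 • w) j
  have ha2 : ∀ j, |b j - t2 * w j| ≤ M := fun j => by
    rw [← hM2]; simpa using abs_apply_le_norm (b - t2 • w) j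
  have hle : ∀ j, |b j - tm * w j| ≤ M := by
    intro j
    have e : b j - tm * w j = ((b j - t1 * w j) + (b j - t2 * w j)) / 2 := by
      rw [htm]; ring
    have hs : |(b j - t1 * w j) + (b j - t2 * w j)| ≤ 2 * M :=
      le_trans (abs_add_le _ _) (by linarith [ha1 j, ha2 j])
    rw [e, abs_div, abs_two]
    linarith
  have hnorm : ‖b - tm • w‖ = M := by
    refine le_antisymm (norm_le_of_forall_abs _ M hMnn fun j => by simpa using hle j) ?_
    exact h1 tm
  obtain ⟨j, hj⟩ := exists_abs_eq_norm (b - tm • w)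
  have hj' : |b j - tm * w j| = M := by rw [← hnorm]; simpa using hj
  have e : b j - tm * w j = ((b j - t1 * w j) + (b j - t2 * w j)) / 2 := by
    rw [htm]; ring
  have hx : b j - t1 * w j = b j - t2 * w j := by
    rcases abs_eq hMnn |>.mp hj' with h | h <;>
    · rw [e] at h
      have a1 := ha1 j; have a2 := ha2 j
      rcases abs_le.mp a1 with ⟨a1l, a1r⟩
      rcases abs_le.mp a2 with ⟨a2l, a2r⟩
      linarith
  have : (t2 - t1) * w j = 0 := by linarith
  rcases mul_eq_zero.mp this with h | h
  · linarith
  · exact absurd h (hw j)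

end OneDim2

section OneDim3

variable {N : ℕ}

lemma push [Nonempty (Fin N)] (b w : Fin N → ℝ) (hw : Cheb w) (t : ℝ)
    (ht : ∀ s : ℝ, ‖b - t • w‖ ≤ ‖b - s • w‖) (hM : 0 < ‖b - t • w‖)
    (hall : ∀ j, |b j - t * w j| = ‖b - t • w‖ → 0 < w j * (b j - t * w j)) : False := by
  set M := ‖b - t • w‖ with hMdef
  set g : Fin N → ℝ := fun j =>
    if |b j - t * w j| = M then (w j * (b j - t * w j)) / (w j) ^ 2
    else (M - |b j - t * w j|) / (2 * |w j|) with hg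
  have hgpos : ∀ j, 0 < g j := by
    intro j
    have hwj : w j ≠ 0 := hw j
    show 0 < if |b j - t * w j| = M then w j * (b j - t * w j) / w j ^ 2 else (M - |b j - t * w j|) / (2 * |w j|)
    by_cases h : |b j - t * w j| = M
    · rw [if_pos h]
      exact div_pos (hall j h) (by positivity)
    · rw [if_neg h]
      have h1 : |b j - t * w j| ≤ M := by simpa using abs_apply_le_norm (b - t • w) j
      have h2 : |b j - t * w j| < M := lt_of_le_of_ne h1 h
      have hawj : (0:ℝ) < |w j| := abs_pos.mpr hwj
      exact div_pos (by linarith) (by positivity)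
  obtain ⟨ε, hεpos, hεle⟩ : ∃ ε : ℝ, 0 < ε ∧ ∀ j, ε ≤ g j := by
    obtain ⟨j0, hj0⟩ := Finite.exists_min g
    exact ⟨g j0, hgpos j0, hj0⟩
  have hlt : ∀ j, |b j - (t + ε) * w j| < M := by
    intro j
    have hle : ε ≤ g j := hεle j
    have hwj : w j ≠ 0 := hw j
    have hwj2 : (0:ℝ) < (w j)^2 := by positivity
    have hawj : (0:ℝ) < |w j| := abs_pos.mpr hwj
    have e : b j - (t + ε) * w j = (b j - t * w j) - ε * w j := by ring
    by_cases h : |b j - t * w j| = M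
    · have hpos := hall j h
      have hle2 : ε ≤ if |b j - t * w j| = M then w j * (b j - t * w j) / w j ^ 2 else (M - |b j - t * w j|) / (2 * |w j|) := hle
      rw [if_pos h] at hle2
      have hεle' : ε * (w j)^2 ≤ w j * (b j - t * w j) := by
        calc ε * (w j)^2 ≤ (w j * (b j - t * w j)) / (w j)^2 * (w j)^2 := by nlinarith [hle2]
          _ = w j * (b j - t * w j) := by field_simp
      have hsq : ((b j - t * w j) - ε * w j)^2 < M^2 := by
        have hMsq : (b j - t * w j)^2 = M^2 := by
          rw [← h]; rw [sq_abs]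
        nlinarith
      rw [e]
      nlinarith [abs_nonneg ((b j - t * w j) - ε * w j), sq_abs ((b j - t * w j) - ε * w j)]
    · have h1 : |b j - t * w j| ≤ M := by simpa using abs_apply_le_norm (b - t • w) j
      have h2 : |b j - t * w j| < M := lt_of_le_of_ne h1 h
      have hεle' : ε ≤ (M - |b j - t * w j|) / (2 * |w j|) := by
        have hle2 : ε ≤ if |b j - t * w j| = M then w j * (b j - t * w j) / w j ^ 2 else (M - |b j - t * w j|) / (2 * |w j|) := hle
        rwa [if_neg h] at hle2
      have h3 : ε * |w j| < M - |b j - t * w j| := by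
        have h3' : ε * (2 * |w j|) ≤ M - |b j - t * w j| :=
          (le_div_iff₀ (by positivity)).mp hεle'
        nlinarith [mul_pos hεpos hawj]
      have h4 : |ε * w j| = ε * |w j| := by rw [abs_mul, abs_of_pos hεpos]
      calc |b j - (t + ε) * w j| ≤ |b j - t * w j| + |ε * w j| := by rw [e]; exact abs_sub _ _
        _ < M := by rw [h4]; linarith
  obtain ⟨j, hj⟩ := exists_abs_eq_norm (b - (t + ε) • w)
  have : ‖b - (t + ε) • w‖ < M := by
    rw [← hj]; simpa using hlt j
  exact absurd (ht (t + ε)) (by linarith)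

end OneDim3
section OneDim4

variable {N : ℕ}

lemma equiosc [Nonempty (Fin N)] (b w : Fin N → ℝ) (hw : Cheb w) (t : ℝ)
    (ht : ∀ s : ℝ, ‖b - t • w‖ ≤ ‖b - s • w‖) (hM : 0 < ‖b - t • w‖) :
    ∃ j1 j2 : Fin N, |b j1 - t * w j1| = ‖b - t • w‖ ∧ |b j2 - t * w j2| = ‖b - t • w‖ ∧
      0 < w j1 * (b j1 - t * w j1) ∧ w j2 * (b j2 - t * w j2) < 0 := by
  set M := ‖b - t • w‖ with hMdef
  have hne : ∀ j, |b j - t * w j| = M → w j * (b j - t * w j) ≠ 0 := by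
    intro j hj
    intro h0
    rcases mul_eq_zero.mp h0 with h | h
    · exact hw j h
    · rw [h, abs_zero] at hj; linarith
  -- negative point exists
  have hneg : ∃ j2, |b j2 - t * w j2| = M ∧ w j2 * (b j2 - t * w j2) < 0 := by
    by_contra hcon
    push_neg at hcon
    refine push b w hw t ht hM fun j hj => ?_
    have := hcon j hj
    rcases lt_trichotomy (w j * (b j - t * w j)) 0 with h | h | h
    · exact absurd h (not_lt.mpr this)
    · exact absurd h (hne j hj)
    · exact h
  -- positive point: apply the negative result to the reflected vector
  have hpos : ∃ j1, |b j1 - t * w j1| = M ∧ 0 < w j1 * (b j1 - t * w j1) := by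
    set b' : Fin N → ℝ := fun j => 2 * t * w j - b j with hb'
    have hval : ∀ s : ℝ, b' - s • w = -(b - (2*t - s) • w) := by
      intro s; funext j; simp only [hb', Pi.sub_apply, Pi.smul_apply, smul_eq_mul, Pi.neg_apply]
      ring
    have hnorm : ∀ s : ℝ, ‖b' - s • w‖ = ‖b - (2*t - s) • w‖ := by
      intro s; rw [hval, norm_neg]
    have ht' : ∀ s : ℝ, ‖b' - t • w‖ ≤ ‖b' - s • w‖ := by
      intro s
      rw [hnorm, hnorm]
      have : 2*t - t = t := by ring
      rw [this]
      exact ht _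
    have hM' : 0 < ‖b' - t • w‖ := by
      rw [hnorm]
      have : 2*t - t = t := by ring
      rw [this]; exact hM
    have hMeq : ‖b' - t • w‖ = M := by
      rw [hnorm]; have : 2*t - t = t := by ring
      rw [this]
    -- re-run the negative-point argument for b'
    have hne' : ∀ j, |b' j - t * w j| = M → w j * (b' j - t * w j) ≠ 0 := by
      intro j hj h0
      rcases mul_eq_zero.mp h0 with h | h
      · exact hw j h
      · rw [h, abs_zero] at hj; linarith
    have hneg' : ∃ j2, |b' j2 - t * w j2| = M ∧ w j2 * (b' j2 - t * w j2) < 0 := by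
      by_contra hcon
      push_neg at hcon
      refine push b' w hw t ht' hM' fun j hj => ?_
      have h2 : |b' j - t * w j| = M := by rw [← hMeq]; exact hj
      have := hcon j h2
      rcases lt_trichotomy (w j * (b' j - t * w j)) 0 with h | h | h
      · exact absurd h (not_lt.mpr this)
      · exact absurd h (hne' j h2)
      · exact h
    obtain ⟨j1, hj1, hj1'⟩ := hneg'
    refine ⟨j1, ?_, ?_⟩
    · have e : b' j1 - t * w j1 = -(b j1 - t * w j1) := by simp only [hb']; ring
      rw [e, abs_neg] at hj1; exact hj1
    · have e : b' j1 - t * w j1 = -(b j1 - t * w j1) := by simp only [hb']; ring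
      rw [e] at hj1'; nlinarith
  obtain ⟨j1, h1, h1'⟩ := hpos
  obtain ⟨j2, h2, h2'⟩ := hneg
  exact ⟨j1, j2, h1, h2, h1', h2'⟩

end OneDim4
set_option linter.unusedSectionVars false
set_option linter.unusedVariables false
section Matrix

variable {m n : ℕ} [Nonempty (Fin m)] [Nonempty (Fin n)] (A : Fin m → Fin n → ℝ)

lemma le_cerr (u : Fin m → ℝ) (v : Fin n → ℝ) (i : Fin m) (j : Fin n) :
    |A i j - u i * v j| ≤ Cerr A u v := by
  have h1 : |A i j - u i * v j| ≤ ⨆ j', |A i j' - u i * v j'| :=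
    le_ciSup (f := fun j' => |A i j' - u i * v j'|) (Set.Finite.bddAbove (Set.finite_range _)) j
  have h2 : (⨆ j', |A i j' - u i * v j'|) ≤ Cerr A u v :=
    le_ciSup (f := fun i' => ⨆ j', |A i' j' - u i' * v j'|) (Set.Finite.bddAbove (Set.finite_range _)) i
  exact h1.trans h2

lemma cerr_le (u : Fin m → ℝ) (v : Fin n → ℝ) (B : ℝ)
    (h : ∀ i j, |A i j - u i * v j| ≤ B) : Cerr A u v ≤ B :=
  ciSup_le fun i => ciSup_le fun j => h i j

lemma cerr_nonneg (u : Fin m → ℝ) (v : Fin n → ℝ) : 0 ≤ Cerr A u v := by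
  have := le_cerr A u v (Classical.arbitrary _) (Classical.arbitrary _)
  exact le_trans (abs_nonneg _) this

lemma exists_cerr (u : Fin m → ℝ) (v : Fin n → ℝ) :
    ∃ i j, |A i j - u i * v j| = Cerr A u v := by
  obtain ⟨⟨i, j⟩, hmax⟩ := Finite.exists_max
    (fun p : Fin m × Fin n => |A p.1 p.2 - u p.1 * v p.2|)
  refine ⟨i, j, le_antisymm (le_cerr A u v i j) (cerr_le A u v _ fun i' j' => hmax (i', j'))⟩

lemma rownorm_le (u : Fin m → ℝ) (v : Fin n → ℝ) (i : Fin m) :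
    ‖A i - u i • v‖ ≤ Cerr A u v := by
  refine norm_le_of_forall_abs _ _ (cerr_nonneg A u v) fun j => ?_
  rw [sub_smul_apply]
  exact le_cerr A u v i j

lemma colnorm_le (u : Fin m → ℝ) (v : Fin n → ℝ) (j : Fin n) :
    ‖(fun i => A i j) - v j • u‖ ≤ Cerr A u v := by
  refine norm_le_of_forall_abs _ _ (cerr_nonneg A u v) fun i => ?_
  rw [sub_smul_apply]
  rw [show A i j - v j * u i = A i j - u i * v j by ring]
  exact le_cerr A u v i j

lemma abs_le_rownorm (u : Fin m → ℝ) (v : Fin n → ℝ) (i : Fin m) (j : Fin n) (t : ℝ) :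
    |A i j - t * v j| ≤ ‖A i - t • v‖ := by
  have := abs_apply_le_norm (A i - t • v) j
  rwa [sub_smul_apply] at this

lemma abs_le_colnorm (u : Fin m → ℝ) (v : Fin n → ℝ) (i : Fin m) (j : Fin n) (t : ℝ) :
    |A i j - t * u i| ≤ ‖(fun i' => A i' j) - t • u‖ := by
  have := abs_apply_le_norm ((fun i' => A i' j) - t • u) i
  rwa [sub_smul_apply] at this

lemma phi_step (u : Fin m → ℝ) (v : Fin n → ℝ) (hv : Cheb v) :
    Cerr A (phi A v) v ≤ Cerr A u v := by
  refine cerr_le A _ v _ fun i j => ?_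
  calc |A i j - phi A v i * v j| ≤ ‖A i - phi A v i • v‖ := abs_le_rownorm A u v i j _
    _ ≤ ‖A i - u i • v‖ := mu_isMin (A i) v hv (u i)
    _ ≤ Cerr A u v := rownorm_le A u v i

lemma psi_step (u : Fin m → ℝ) (v : Fin n → ℝ) (hu : Cheb u) :
    Cerr A u (psi A u) ≤ Cerr A u v := by
  refine cerr_le A u _ _ fun i j => ?_
  rw [show A i j - u i * psi A u j = A i j - psi A u j * u i by ring]
  calc |A i j - psi A u j * u i| ≤ ‖(fun i' => A i' j) - psi A u j • u‖ :=
        abs_le_colnorm A u v i j _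
    _ ≤ ‖(fun i' => A i' j) - v j • u‖ := mu_isMin (fun i' => A i' j) u hu (v j)
    _ ≤ Cerr A u v := colnorm_le A u v j

end Matrix
section Graph

lemma graph_lemma {m n : ℕ} (S : Set (Fin m × Fin n)) (σ : Fin m × Fin n → ℝ)
    (hS : S.Nonempty)
    (hsig : ∀ p ∈ S, σ p = 1 ∨ σ p = -1)
    (hrow : ∀ p ∈ S, ∃ j', (p.1, j') ∈ S ∧ σ (p.1, j') = -σ p)
    (hcol : ∀ p ∈ S, ∃ i', (i', p.2) ∈ S ∧ σ (i', p.2) = -σ p) :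
    ∃ k, 2 ≤ k ∧ ∃ (r : ℕ → Fin m) (c : ℕ → Fin n), c k = c 0 ∧
      (∀ s t : ℕ, s < k → t < k → ∀ bs bt : Bool,
        ((r s, if bs then c (s + 1) else c s) : Fin m × Fin n) =
          (r t, if bt then c (t + 1) else c t) → s = t ∧ bs = bt) ∧
      (∀ s < k, (r s, c s) ∈ S ∧ (r s, c (s + 1)) ∈ S) ∧
      ∃ ε : ℝ, ∀ s < k, σ (r s, c s) = ε ∧ σ (r s, c (s + 1)) = -ε := by
  classical
  -- choice functions
  set nextC : Fin m × Fin n → Fin n := fun p =>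
    if h : p ∈ S then (hrow p h).choose else p.2 with hnextC
  set nextR : Fin m × Fin n → Fin m := fun p =>
    if h : p ∈ S then (hcol p h).choose else p.1 with hnextR
  have hC : ∀ p ∈ S, (p.1, nextC p) ∈ S ∧ σ (p.1, nextC p) = -σ p := by
    intro p hp
    have := (hrow p hp).choose_spec
    simpa [hnextC, dif_pos hp] using this
  have hR : ∀ p ∈ S, (nextR p, p.2) ∈ S ∧ σ (nextR p, p.2) = -σ p := by
    intro p hp
    have := (hcol p hp).choose_spec
    simpa [hnextR, dif_pos hp] using this
  set f : Fin m × Fin n → Fin m × Fin n :=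
    fun p => (nextR (p.1, nextC p), nextC p) with hf
  have hfstep : ∀ p ∈ S, f p ∈ S ∧ σ (f p) = σ p := by
    intro p hp
    obtain ⟨h1, h2⟩ := hC p hp
    obtain ⟨h3, h4⟩ := hR _ h1
    constructor
    · simpa [hf] using h3
    · have : σ (f p) = -σ (p.1, nextC p) := by simpa [hf] using h4
      rw [this, h2, neg_neg]
  obtain ⟨p0, hp0⟩ := hS
  -- pigeonhole to find a cycle
  obtain ⟨a, b, hab, heqab⟩ :=
    Finite.exists_ne_map_eq_of_infinite (fun s : ℕ => f^[s] p0)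
  wlog hab' : a < b generalizing a b
  · exact this b a hab.symm heqab.symm (by omega)
  set q : Fin m × Fin n := f^[a] p0 with hq
  have hqS : ∀ s, f^[s] p0 ∈ S ∧ σ (f^[s] p0) = σ p0 := by
    intro s
    induction s with
    | zero => exact ⟨hp0, rfl⟩
    | succ s ih =>
      rw [Function.iterate_succ_apply']
      exact ⟨(hfstep _ ih.1).1, by rw [(hfstep _ ih.1).2, ih.2]⟩
  have hQS : ∀ s, f^[s] q ∈ S ∧ σ (f^[s] q) = σ p0 := by
    intro s
    rw [hq, ← Function.iterate_add_apply]
    exact hqS (s + a)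
  have hcyc : ∃ l, 0 < l ∧ f^[l] q = q := by
    refine ⟨b - a, by omega, ?_⟩
    rw [hq, ← Function.iterate_add_apply]
    have : b - a + a = b := by omega
    rw [this, ← heqab]
  clear_value q
  set L := Nat.find hcyc with hL
  obtain ⟨hLpos, hLfix⟩ : 0 < L ∧ f^[L] q = q := Nat.find_spec hcyc
  have dis : ∀ a' b' : ℕ, a' < b' → b' ≤ L → b' - a' < L → f^[a'] q ≠ f^[b'] q := by
    intro a' b' hab1 hbL hbaL heq
    have h1 : f^[L - b' + a'] q = q := by
      have h2 : f^[L - b'] (f^[a'] q) = f^[L - b'] (f^[b'] q) := by rw [heq]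
      rw [← Function.iterate_add_apply, ← Function.iterate_add_apply] at h2
      have h3 : L - b' + b' = L := by omega
      rw [h3] at h2
      rw [h2, hLfix]
    exact Nat.find_min hcyc (by omega) ⟨by omega, h1⟩
  -- the alternance
  set r : ℕ → Fin m := fun s => (f^[s] q).1 with hr
  set c : ℕ → Fin n := fun s => (f^[s] q).2 with hc
  have hcsucc : ∀ s, c (s + 1) = nextC (f^[s] q) := by
    intro s
    show (f^[s+1] q).2 = _
    rw [Function.iterate_succ_apply']
  have hpt1 : ∀ s, (r s, c s) = f^[s] q := fun s => rfl
  have hpt2 : ∀ s, (r s, c (s + 1)) = ((f^[s] q).1, nextC (f^[s] q)) := by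
    intro s; rw [hcsucc s]
  set ε := σ p0 with hε
  have hmem1 : ∀ s, (r s, c s) ∈ S ∧ σ (r s, c s) = ε := by
    intro s; rw [hpt1]; exact hQS s
  have hmem2 : ∀ s, (r s, c (s + 1)) ∈ S ∧ σ (r s, c (s + 1)) = -ε := by
    intro s
    rw [hpt2]
    obtain ⟨h1, h2⟩ := hC _ (hQS s).1
    exact ⟨h1, by rw [h2, (hQS s).2]⟩
  have hεpm : ε = 1 ∨ ε = -1 := hsig p0 hp0
  have hεne : ε ≠ -ε := by rcases hεpm with h | h <;> rw [h] <;> norm_num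
  -- determinism across the second half-step
  have hdet : ∀ s t : ℕ, (r s, c (s + 1)) = (r t, c (t + 1)) → f^[s+1] q = f^[t+1] q := by
    intro s t h
    rw [Function.iterate_succ_apply', Function.iterate_succ_apply']
    rw [hpt2, hpt2] at h
    injection h with h1 h2
    show (nextR ((f^[s] q).1, nextC (f^[s] q)), nextC (f^[s] q)) =
      (nextR ((f^[t] q).1, nextC (f^[t] q)), nextC (f^[t] q))
    rw [h1, h2]
  have hL2 : 2 ≤ L := by
    by_contra hcon
    have hL1 : L = 1 := by omega
    rw [hL1] at hLfix
    have hc1 : c 1 = c 0 := by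
      show (f^[1] q).2 = (f^[0] q).2
      rw [hLfix]
      simp
    have hpe : ((r 0, c 1) : Fin m × Fin n) = (r 0, c 0) := by rw [hc1]
    have h2 := (hmem2 0).2
    rw [hpe, (hmem1 0).2] at h2
    exact hεne h2
  have hinj1 : ∀ s t : ℕ, s < L → t < L → f^[s] q = f^[t] q → s = t := by
    intro s t hs ht heq
    rcases Nat.lt_trichotomy s t with h | h | h
    · exact absurd heq (dis s t h (by omega) (by omega))
    · exact h
    · exact absurd heq.symm (dis t s h (by omega) (by omega))
  have hinj2 : ∀ s t : ℕ, s < L → t < L → f^[s+1] q = f^[t+1] q → s = t := by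
    intro s t hs ht heq
    rcases Nat.lt_trichotomy s t with h | h | h
    · exact absurd heq (dis (s+1) (t+1) (by omega) (by omega) (by omega))
    · exact h
    · exact absurd heq.symm (dis (t+1) (s+1) (by omega) (by omega) (by omega))
  refine ⟨L, hL2, r, c, ?_, ?_, fun s _ => ⟨(hmem1 s).1, (hmem2 s).1⟩,
    ε, fun s _ => ⟨(hmem1 s).2, (hmem2 s).2⟩⟩
  · show (f^[L] q).2 = (f^[0] q).2
    rw [hLfix]
    simp
  · intro s t hs ht bs bt hpteq
    cases bs <;> cases bt <;> simp at hpteq ⊢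
    · -- false false
      have heq : f^[s] q = f^[t] q := by
        rw [← hpt1 s, ← hpt1 t]
        exact Prod.ext hpteq.1 hpteq.2
      exact hinj1 s t hs ht heq
    · -- bs = false, bt = true
      have hpe : ((r s, c s) : Fin m × Fin n) = (r t, c (t+1)) :=
        Prod.ext hpteq.1 hpteq.2
      have h1 := (hmem1 s).2
      rw [hpe, (hmem2 t).2] at h1
      exact absurd h1.symm hεne
    · -- bs = true, bt = false
      have hpe : ((r s, c (s+1)) : Fin m × Fin n) = (r t, c t) :=
        Prod.ext hpteq.1 hpteq.2
      have h1 := (hmem2 s).2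
      rw [hpe, (hmem1 t).2] at h1
      exact absurd h1 hεne
    · -- true true
      have heq := hdet s t (Prod.ext hpteq.1 hpteq.2)
      exact hinj2 s t hs ht heq

end Graph
section Analysis

variable {m n : ℕ} [Nonempty (Fin m)] [Nonempty (Fin n)]

lemma sign_mul_pos' (x y : ℝ) (hx : 0 < x) : Real.sign (y * x) = Real.sign y := by
  rcases lt_trichotomy y 0 with h | h | h
  · rw [Real.sign_of_neg h, Real.sign_of_neg (by nlinarith : y * x < 0)]
  · rw [h, zero_mul]
  · rw [Real.sign_of_pos h, Real.sign_of_pos (by positivity : 0 < y * x)]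

lemma sign_mul_neg' (x y : ℝ) (hx : x < 0) : Real.sign (y * x) = -Real.sign y := by
  rcases lt_trichotomy y 0 with h | h | h
  · rw [Real.sign_of_neg h, Real.sign_of_pos (by nlinarith : 0 < y * x)]; norm_num
  · rw [h, zero_mul]; simp
  · rw [Real.sign_of_pos h, Real.sign_of_neg (by nlinarith : y * x < 0)]

lemma sign_pm (x : ℝ) (hx : x ≠ 0) : Real.sign x = 1 ∨ Real.sign x = -1 := by
  rcases hx.lt_or_gt with h | h
  · right; exact Real.sign_of_neg h
  · left; exact Real.sign_of_pos h

lemma mem_TSet_iff (A : Fin m → Fin n → ℝ) (u : Fin m → ℝ) (v : Fin n → ℝ)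
    (p : Fin m × Fin n) : p ∈ TSet A u v ↔ |A p.1 p.2 - u p.1 * v p.2| = Cerr A u v :=
  Iff.rfl

lemma psi_analysis (A : Fin m → Fin n → ℝ) (u : Fin m → ℝ) (v : Fin n → ℝ) (hu : Cheb u)
    (hE : Cerr A u (psi A u) = Cerr A u v) (hpos : 0 < Cerr A u v) :
    ∀ p ∈ TSet A u (psi A u),
      psi A u p.2 = v p.2 ∧ p ∈ TSet A u v ∧
      ∃ i1 i2 : Fin m, (i1, p.2) ∈ TSet A u (psi A u) ∧ (i2, p.2) ∈ TSet A u (psi A u) ∧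
        0 < u i1 * (A i1 p.2 - u i1 * psi A u p.2) ∧
        u i2 * (A i2 p.2 - u i2 * psi A u p.2) < 0 := by
  rintro ⟨i, j⟩ hp
  rw [mem_TSet_iff] at hp
  simp only at hp
  set cj : Fin m → ℝ := fun i' => A i' j with hcj
  set t' : ℝ := psi A u j with ht'
  have h4 : ∀ s : ℝ, ‖cj - t' • u‖ ≤ ‖cj - s • u‖ := mu_isMin cj u hu
  have h1 : ‖cj - t' • u‖ ≤ Cerr A u (psi A u) := colnorm_le A u (psi A u) j
  have h2 : Cerr A u (psi A u) ≤ ‖cj - t' • u‖ := by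
    rw [← hp]
    have h2a : |A i j - u i * t'| = |cj i - t' * u i| := by
      rw [hcj]; ring_nf
    rw [h2a]
    exact abs_apply_le_norm (cj - t' • u) i |>.trans_eq' (by rw [sub_smul_apply])
  have hgt' : ‖cj - t' • u‖ = Cerr A u (psi A u) := le_antisymm h1 h2
  have h3 : ‖cj - (v j) • u‖ ≤ Cerr A u v := colnorm_le A u v j
  have hminv : ∀ s : ℝ, ‖cj - (v j) • u‖ ≤ ‖cj - s • u‖ := by
    intro s
    calc ‖cj - (v j) • u‖ ≤ Cerr A u v := h3
      _ = Cerr A u (psi A u) := hE.symm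
      _ = ‖cj - t' • u‖ := hgt'.symm
      _ ≤ ‖cj - s • u‖ := h4 s
  have heq : t' = v j := min_unique cj u hu t' (v j) h4 hminv
  have hmem2 : ((i, j) : Fin m × Fin n) ∈ TSet A u v := by
    rw [mem_TSet_iff]
    simp only
    rw [← heq, hp, hE]
  have hM : 0 < ‖cj - t' • u‖ := by rw [hgt', hE]; exact hpos
  obtain ⟨i1, i2, ha1, ha2, hs1, hs2⟩ := equiosc cj u hu t' h4 hM
  refine ⟨heq, hmem2, i1, i2, ?_, ?_, ?_, ?_⟩
  · rw [mem_TSet_iff]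
    simp only
    rw [show A i1 j - u i1 * t' = cj i1 - t' * u i1 by rw [hcj]; ring, ha1, hgt']
  · rw [mem_TSet_iff]
    simp only
    rw [show A i2 j - u i2 * t' = cj i2 - t' * u i2 by rw [hcj]; ring, ha2, hgt']
  · rw [show A i1 j - u i1 * t' = cj i1 - t' * u i1 by rw [hcj]; ring]
    exact hs1
  · rw [show A i2 j - u i2 * t' = cj i2 - t' * u i2 by rw [hcj]; ring]
    exact hs2

lemma phi_analysis (A : Fin m → Fin n → ℝ) (u : Fin m → ℝ) (w : Fin n → ℝ) (hw : Cheb w)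
    (hE : Cerr A (phi A w) w = Cerr A u w) (hpos : 0 < Cerr A (phi A w) w) :
    ∀ p ∈ TSet A (phi A w) w,
      phi A w p.1 = u p.1 ∧ p ∈ TSet A u w ∧
      ∃ j1 j2 : Fin n, (p.1, j1) ∈ TSet A (phi A w) w ∧ (p.1, j2) ∈ TSet A (phi A w) w ∧
        0 < w j1 * (A p.1 j1 - phi A w p.1 * w j1) ∧
        w j2 * (A p.1 j2 - phi A w p.1 * w j2) < 0 := by
  rintro ⟨i, j⟩ hp
  rw [mem_TSet_iff] at hp
  simp only at hp
  set bi : Fin n → ℝ := A i with hbi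
  set t' : ℝ := phi A w i with ht'
  have h4 : ∀ s : ℝ, ‖bi - t' • w‖ ≤ ‖bi - s • w‖ := mu_isMin bi w hw
  have h1 : ‖bi - t' • w‖ ≤ Cerr A (phi A w) w := rownorm_le A (phi A w) w i
  have h2 : Cerr A (phi A w) w ≤ ‖bi - t' • w‖ := by
    rw [← hp]
    exact abs_apply_le_norm (bi - t' • w) j |>.trans_eq' (by rw [sub_smul_apply])
  have hgt' : ‖bi - t' • w‖ = Cerr A (phi A w) w := le_antisymm h1 h2
  have h3 : ‖bi - (u i) • w‖ ≤ Cerr A u w := rownorm_le A u w i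
  have hminv : ∀ s : ℝ, ‖bi - (u i) • w‖ ≤ ‖bi - s • w‖ := by
    intro s
    calc ‖bi - (u i) • w‖ ≤ Cerr A u w := h3
      _ = Cerr A (phi A w) w := hE.symm
      _ = ‖bi - t' • w‖ := hgt'.symm
      _ ≤ ‖bi - s • w‖ := h4 s
  have heq : t' = u i := min_unique bi w hw t' (u i) h4 hminv
  have hmem2 : ((i, j) : Fin m × Fin n) ∈ TSet A u w := by
    rw [mem_TSet_iff]
    simp only
    rw [← heq, hp, hE]
  have hM : 0 < ‖bi - t' • w‖ := by rw [hgt']; exact hpos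
  obtain ⟨j1, j2, ha1, ha2, hs1, hs2⟩ := equiosc bi w hw t' h4 hM
  refine ⟨heq, hmem2, j1, j2, ?_, ?_, hs1, hs2⟩
  · rw [mem_TSet_iff]
    simp only
    rw [show A i j1 - t' * w j1 = bi j1 - t' * w j1 by rw [hbi], ha1, hgt']
  · rw [mem_TSet_iff]
    simp only
    rw [show A i j2 - t' * w j2 = bi j2 - t' * w j2 by rw [hbi], ha2, hgt']

end Analysis
noncomputable def chain {m n : ℕ} (A : Fin m → Fin n → ℝ) (v0 : Fin n → ℝ) :
    ℕ → (Fin m → ℝ) × (Fin n → ℝ)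
  | 0 => (phi A v0, v0)
  | k + 1 =>
      if Even k then ((chain A v0 k).1, psi A (chain A v0 k).1)
      else (phi A (chain A v0 k).2, (chain A v0 k).2)

section Chain

variable {m n : ℕ} [Nonempty (Fin m)] [Nonempty (Fin n)]
variable (A : Fin m → Fin n → ℝ) (v : Fin n → ℝ)

lemma chain_zero : chain A v 0 = (phi A v, v) := rfl

lemma chain_succ_even (k : ℕ) (hk : Even k) :
    chain A v (k + 1) = ((chain A v k).1, psi A (chain A v k).1) := by
  rw [chain, if_pos hk]

lemma chain_succ_odd (k : ℕ) (hk : ¬ Even k) :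
    chain A v (k + 1) = (phi A (chain A v k).2, (chain A v k).2) := by
  rw [chain, if_neg hk]

lemma chain_cheb (hA : PreservesCheb A) (hv : Cheb v) (k : ℕ) :
    Cheb (chain A v k).1 ∧ Cheb (chain A v k).2 := by
  induction k with
  | zero => exact ⟨hA.1 v hv, hv⟩
  | succ k ih =>
    by_cases hk : Even k
    · rw [chain_succ_even A v k hk]
      exact ⟨ih.1, hA.2 _ ih.1⟩
    · rw [chain_succ_odd A v k hk]
      exact ⟨hA.1 _ ih.2, ih.2⟩

lemma chain_anti (hA : PreservesCheb A) (hv : Cheb v) (k : ℕ) :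
    Cerr A (chain A v (k+1)).1 (chain A v (k+1)).2 ≤ Cerr A (chain A v k).1 (chain A v k).2 := by
  by_cases hk : Even k
  · rw [chain_succ_even A v k hk]
    exact psi_step A _ _ (chain_cheb A v hA hv k).1
  · rw [chain_succ_odd A v k hk]
    exact phi_step A _ _ (chain_cheb A v hA hv k).2

lemma chain_mono (hA : PreservesCheb A) (hv : Cheb v) :
    Antitone (fun k => Cerr A (chain A v k).1 (chain A v k).2) :=
  antitone_nat_of_succ_le (chain_anti A v hA hv)

lemma chain_vseq (k : ℕ) :
    (chain A v (2*k)).2 = vseq A v k ∧ (chain A v (2*k)).1 = phi A (vseq A v k) := by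
  induction k with
  | zero => exact ⟨rfl, rfl⟩
  | succ k ih =>
    have e1 : 2 * (k+1) = (2*k + 1) + 1 := by ring
    have h1 : chain A v (2*k+1) = ((chain A v (2*k)).1, psi A (chain A v (2*k)).1) :=
      chain_succ_even A v (2*k) (even_two_mul k)
    have h2 : chain A v ((2*k+1)+1) = (phi A (chain A v (2*k+1)).2, (chain A v (2*k+1)).2) :=
      chain_succ_odd A v (2*k+1) (by simp [parity_simps])
    rw [e1, h2, h1]
    simp only
    rw [ih.2]
    constructor
    · show psi A (phi A (vseq A v k)) = vseq A v (k+1)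
      rfl
    · show phi A (psi A (phi A (vseq A v k))) = phi A (vseq A v (k+1))
      rfl

lemma chain_const (hA : PreservesCheb A) (hv : Cheb v)
    (hlim : Filter.Tendsto (fun k => Cerr A (phi A (vseq A v k)) (vseq A v k)) Filter.atTop
      (nhds (Cerr A (phi A v) v))) (k : ℕ) :
    Cerr A (chain A v k).1 (chain A v k).2 = Cerr A (phi A v) v := by
  set e : ℕ → ℝ := fun k => Cerr A (phi A (vseq A v k)) (vseq A v k) with he
  have hee : ∀ k, e k = Cerr A (chain A v (2*k)).1 (chain A v (2*k)).2 := by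
    intro k
    rw [(chain_vseq A v k).1, (chain_vseq A v k).2]
  have hanti : Antitone e := by
    apply antitone_nat_of_succ_le
    intro k
    rw [hee, hee]
    have h1 := chain_mono A v hA hv (show 2*k ≤ 2*(k+1) by omega)
    exact h1
  have hE0 : e 0 = Cerr A (phi A v) v := by
    have hv0 : vseq A v 0 = v := by simp [vseq]
    simp only [he, hv0]
  have he0 : ∀ k, e k = e 0 := by
    intro k
    refine le_antisymm (hanti (Nat.zero_le k)) ?_
    have hev : ∀ᶠ l in Filter.atTop, e l ≤ e k :=
      Filter.eventually_atTop.mpr ⟨k, fun l hl => hanti hl⟩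
    have h5 : Cerr A (phi A v) v ≤ e k := le_of_tendsto hlim hev
    rw [hE0]
    exact h5
  have h1 : Cerr A (chain A v (2*k)).1 (chain A v (2*k)).2 = Cerr A (phi A v) v := by
    rw [← hee, he0, hE0]
  have h2 : Cerr A (chain A v k).1 (chain A v k).2 ≤ Cerr A (phi A v) v := by
    have := chain_mono A v hA hv (Nat.zero_le k)
    simpa [chain_zero] using this
  have h3 : Cerr A (phi A v) v ≤ Cerr A (chain A v k).1 (chain A v k).2 := by
    rw [← h1]
    exact chain_mono A v hA hv (show k ≤ 2*k by omega)
  linarith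

end Chain
section ChainFacts

variable {m n : ℕ} [Nonempty (Fin m)] [Nonempty (Fin n)]
variable (A : Fin m → Fin n → ℝ) (v : Fin n → ℝ)

lemma chain_step (hA : PreservesCheb A) (hv : Cheb v)
    (hconst : ∀ k, Cerr A (chain A v k).1 (chain A v k).2 = Cerr A (phi A v) v)
    (hpos : 0 < Cerr A (phi A v) v) (k : ℕ) :
    ∀ p ∈ TSet A (chain A v (k+1)).1 (chain A v (k+1)).2,
      p ∈ TSet A (chain A v k).1 (chain A v k).2 ∧
      (chain A v (k+1)).1 p.1 = (chain A v k).1 p.1 ∧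
      (chain A v (k+1)).2 p.2 = (chain A v k).2 p.2 := by
  intro p hp
  by_cases hk : Even k
  · have hc := chain_succ_even A v k hk
    have hcu : (chain A v (k+1)).1 = (chain A v k).1 := by rw [hc]
    have hcv : (chain A v (k+1)).2 = psi A (chain A v k).1 := by rw [hc]
    have hp' : p ∈ TSet A (chain A v k).1 (psi A (chain A v k).1) := by
      rw [← hcv, ← hcu]; exact hp
    have hE : Cerr A (chain A v k).1 (psi A (chain A v k).1)
        = Cerr A (chain A v k).1 (chain A v k).2 := by
      have e1 : Cerr A (chain A v k).1 (psi A (chain A v k).1) = Cerr A (phi A v) v := by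
        conv_lhs => rw [← hcv, ← hcu]
        exact hconst (k+1)
      rw [e1, hconst k]
    have hpos' : 0 < Cerr A (chain A v k).1 (chain A v k).2 := by
      rw [hconst k]; exact hpos
    obtain ⟨h1, h2, _⟩ := psi_analysis A (chain A v k).1 (chain A v k).2
      (chain_cheb A v hA hv k).1 hE hpos' p hp'
    refine ⟨h2, by rw [hcu], ?_⟩
    rw [hcv]
    exact h1
  · have hc := chain_succ_odd A v k hk
    have hcu : (chain A v (k+1)).1 = phi A (chain A v k).2 := by rw [hc]
    have hcv : (chain A v (k+1)).2 = (chain A v k).2 := by rw [hc]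
    have hp' : p ∈ TSet A (phi A (chain A v k).2) (chain A v k).2 := by
      rw [← hcu, ← hcv]; exact hp
    have hE : Cerr A (phi A (chain A v k).2) (chain A v k).2
        = Cerr A (chain A v k).1 (chain A v k).2 := by
      have e1 : Cerr A (phi A (chain A v k).2) (chain A v k).2 = Cerr A (phi A v) v := by
        conv_lhs => rw [← hcu, ← hcv]
        exact hconst (k+1)
      rw [e1, hconst k]
    have hpos' : 0 < Cerr A (phi A (chain A v k).2) (chain A v k).2 := by
      rw [hE, hconst k]; exact hpos
    obtain ⟨h1, h2, _⟩ := phi_analysis A (chain A v k).1 (chain A v k).2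
      (chain_cheb A v hA hv k).2 hE hpos' p hp'
    exact ⟨h2, by rw [hcu]; exact h1, by rw [hcv]⟩

lemma chain_orig (hA : PreservesCheb A) (hv : Cheb v)
    (hconst : ∀ k, Cerr A (chain A v k).1 (chain A v k).2 = Cerr A (phi A v) v)
    (hpos : 0 < Cerr A (phi A v) v) (k : ℕ) :
    ∀ p ∈ TSet A (chain A v k).1 (chain A v k).2,
      (chain A v k).1 p.1 = phi A v p.1 ∧ (chain A v k).2 p.2 = v p.2 ∧
      p ∈ TSet A (phi A v) v := by
  induction k with
  | zero => exact fun p hp => ⟨rfl, rfl, hp⟩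
  | succ k ih =>
    intro p hp
    obtain ⟨hmem, h1, h2⟩ := chain_step A v hA hv hconst hpos k p hp
    obtain ⟨h3, h4, h5⟩ := ih p hmem
    exact ⟨by rw [h1, h3], by rw [h2, h4], h5⟩

end ChainFacts

section TauHelpers

variable {m n : ℕ} (A : Fin m → Fin n → ℝ) (u : Fin m → ℝ) (v : Fin n → ℝ)

lemma tau_eq_pos_col (i : Fin m) (j : Fin n) (h : 0 < u i * (A i j - u i * v j)) :
    tau A u v i j = Real.sign (v j) := by
  rw [tau, show u i * v j * (A i j - u i * v j) = v j * (u i * (A i j - u i * v j)) by ring]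
  exact sign_mul_pos' _ _ h

lemma tau_eq_neg_col (i : Fin m) (j : Fin n) (h : u i * (A i j - u i * v j) < 0) :
    tau A u v i j = -Real.sign (v j) := by
  rw [tau, show u i * v j * (A i j - u i * v j) = v j * (u i * (A i j - u i * v j)) by ring]
  exact sign_mul_neg' _ _ h

lemma tau_eq_pos_row (i : Fin m) (j : Fin n) (h : 0 < v j * (A i j - u i * v j)) :
    tau A u v i j = Real.sign (u i) := by
  rw [tau, show u i * v j * (A i j - u i * v j) = u i * (v j * (A i j - u i * v j)) by ring]
  exact sign_mul_pos' _ _ h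

lemma tau_eq_neg_row (i : Fin m) (j : Fin n) (h : v j * (A i j - u i * v j) < 0) :
    tau A u v i j = -Real.sign (u i) := by
  rw [tau, show u i * v j * (A i j - u i * v j) = u i * (v j * (A i j - u i * v j)) by ring]
  exact sign_mul_neg' _ _ h

lemma pick_opp {β : Type*} (x1 x2 : β) (σp s : ℝ) (hσ : σp = 1 ∨ σp = -1)
    (hs : s = 1 ∨ s = -1) (Q : β → Prop) (h1 : Q x1) (h2 : Q x2)
    (t1 : ℝ) (t2 : ℝ) (ht1 : t1 = s) (ht2 : t2 = -s) :
    ∃ x, Q x ∧ ((x = x1 ∧ t1 = -σp) ∨ (x = x2 ∧ t2 = -σp)) := by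
  by_cases hcase : σp = s
  · exact ⟨x2, h2, Or.inr ⟨rfl, by rw [ht2, hcase]⟩⟩
  · have hh : σp = -s := by rcases hσ with h | h <;> rcases hs with h' | h' <;> simp_all
    exact ⟨x1, h1, Or.inl ⟨rfl, by rw [ht1, hh, neg_neg]⟩⟩

lemma opp_of_ne (a s : ℝ) (ha : a = 1 ∨ a = -1) (hs : s = 1 ∨ s = -1) (hne : a ≠ s) :
    a = -s := by
  rcases ha with h | h <;> rcases hs with h' | h' <;> simp_all

end TauHelpers
theorem stmt17 {m n : ℕ} (hm : 2 ≤ m) (hn : 2 ≤ n) (A : Fin m → Fin n → ℝ)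
    (hA : PreservesCheb A) (v : Fin n → ℝ) (hv : Cheb v)
    (hlim : Filter.Tendsto (fun k => Cerr A (phi A (vseq A v k)) (vseq A v k)) atTop
      (nhds (Cerr A (phi A v) v))) :
    ∃ k : ℕ, 2 ≤ k ∧ ∃ (r : ℕ → Fin m) (c : ℕ → Fin n), c k = c 0 ∧
      (∀ s t : ℕ, s < k → t < k → ∀ bs bt : Bool,
        ((r s, if bs then c (s + 1) else c s) : Fin m × Fin n) =
          (r t, if bt then c (t + 1) else c t) → s = t ∧ bs = bt) ∧
      (∀ s < k, (r s, c s) ∈ TSet A (phi A v) v ∧ (r s, c (s + 1)) ∈ TSet A (phi A v) v) ∧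
      ∃ ε : ℝ, ∀ s < k,
        tau A (phi A v) v (r s) (c s) = ε ∧ tau A (phi A v) v (r s) (c (s + 1)) = -ε := by
  haveI : Nonempty (Fin m) := ⟨⟨0, by omega⟩⟩
  haveI : Nonempty (Fin n) := ⟨⟨0, by omega⟩⟩
  rcases eq_or_lt_of_le (cerr_nonneg A (phi A v) v) with hE0 | hEpos
  · -- degenerate case : Cerr = 0
    have hCz : Cerr A (phi A v) v = 0 := hE0.symm
    have hall : ∀ p : Fin m × Fin n, p ∈ TSet A (phi A v) v := by
      intro p
      rw [mem_TSet_iff, hCz]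
      have h1 := le_cerr A (phi A v) v p.1 p.2
      rw [hCz] at h1
      exact le_antisymm h1 (abs_nonneg _)
    have htau0 : ∀ (i : Fin m) (j : Fin n), tau A (phi A v) v i j = 0 := by
      intro i j
      have h1 : |A i j - phi A v i * v j| = 0 := by
        have h2 := hall (i, j)
        rw [mem_TSet_iff, hCz] at h2
        exact h2
      have h2 : A i j - phi A v i * v j = 0 := abs_eq_zero.mp h1
      rw [tau, h2, mul_zero, Real.sign_zero]
    refine ⟨2, le_refl 2,
      (fun s => if s = 0 then ⟨0, by omega⟩ else ⟨1, by omega⟩),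
      (fun s => if s = 1 then ⟨1, by omega⟩ else ⟨0, by omega⟩), by norm_num, ?_,
      fun s _ => ⟨hall _, hall _⟩, 0,
      fun s _ => ⟨htau0 _ _, by rw [htau0, neg_zero]⟩⟩
    intro s t hs ht bs bt h
    clear hlim hA hv hCz hE0 hall htau0
    interval_cases s <;> interval_cases t <;> cases bs <;> cases bt <;>
      simp_all [Prod.ext_iff, Fin.ext_iff]
  · -- main case
    have hconst := chain_const A v hA hv hlim
    have horig := chain_orig A v hA hv hconst hEpos
    have hstep := chain_step A v hA hv hconst hEpos
    have hucheb : Cheb (phi A v) := hA.1 v hv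
    set T : ℕ → Set (Fin m × Fin n) :=
      fun k => TSet A (chain A v k).1 (chain A v k).2 with hT
    have hTsub : ∀ k, T (k+1) ⊆ T k := fun k p hp => (hstep k p hp).1
    have hstab : ∃ k, Even k ∧ T (k+1) = T (k+2) := by
      by_contra hcon
      push_neg at hcon
      have hdec : ∀ j : ℕ, (T (2*j+3)).ncard < (T (2*j+1)).ncard := by
        intro j
        have hne : T (2*j+1) ≠ T (2*j+2) := by
          have h0 := hcon (2*j) (even_two_mul j)
          convert h0 using 3
        have hss : T (2*j+2) ⊂ T (2*j+1) :=
          HasSubset.Subset.ssubset_of_ne (hTsub (2*j+1)) hne.symm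
        have h1 : (T (2*j+2)).ncard < (T (2*j+1)).ncard :=
          Set.ncard_lt_ncard hss (Set.toFinite _)
        have h2 : (T (2*j+3)).ncard ≤ (T (2*j+2)).ncard :=
          Set.ncard_le_ncard (hTsub (2*j+2)) (Set.toFinite _)
        omega
      have hbound : ∀ j : ℕ, (T (2*j+1)).ncard + j ≤ (T 1).ncard := by
        intro j
        induction j with
        | zero => simp
        | succ j ih =>
          have h3 := hdec j
          have e : 2*(j+1)+1 = 2*j+3 := by ring
          rw [e]
          omega
      have := hbound ((T 1).ncard + 1)
      omega
    obtain ⟨k0, hk0, hTeq⟩ := hstab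
    have hoddk : ¬ Even (k0+1) := by simp [Nat.even_add_one, hk0]
    have hcu : (chain A v (k0+1)).1 = (chain A v k0).1 := by
      rw [chain_succ_even A v k0 hk0]
    have hcv : (chain A v (k0+1)).2 = psi A (chain A v k0).1 := by
      rw [chain_succ_even A v k0 hk0]
    have hdu : (chain A v (k0+2)).1 = phi A (chain A v (k0+1)).2 := by
      rw [chain_succ_odd A v (k0+1) hoddk]
    have hdv : (chain A v (k0+2)).2 = (chain A v (k0+1)).2 := by
      rw [chain_succ_odd A v (k0+1) hoddk]
    set σ : Fin m × Fin n → ℝ := fun p => tau A (phi A v) v p.1 p.2 with hσ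
    have hST1 : T (k0+1) = TSet A (chain A v k0).1 (psi A (chain A v k0).1) := by
      show TSet A (chain A v (k0+1)).1 (chain A v (k0+1)).2 = _
      rw [hcu, hcv]
    have hST2 : T (k0+2) = TSet A (phi A (chain A v (k0+1)).2) (chain A v (k0+1)).2 := by
      show TSet A (chain A v (k0+2)).1 (chain A v (k0+2)).2 = _
      rw [hdu, hdv]
    have hSsub : T (k0+1) ⊆ TSet A (phi A v) v := fun p hp => (horig (k0+1) p hp).2.2
    have hSne : (T (k0+1)).Nonempty := by
      obtain ⟨i, j, hij⟩ := exists_cerr A (chain A v (k0+1)).1 (chain A v (k0+1)).2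
      exact ⟨(i,j), hij⟩
    have hsig : ∀ p ∈ T (k0+1), σ p = 1 ∨ σ p = -1 := by
      intro p hp
      have hmem := hSsub hp
      rw [mem_TSet_iff] at hmem
      have hr : A p.1 p.2 - phi A v p.1 * v p.2 ≠ 0 := by
        intro h0; rw [h0, abs_zero] at hmem; linarith
      exact sign_pm _ (mul_ne_zero (mul_ne_zero (hucheb p.1) (hv p.2)) hr)
    -- column property via the psi step k0 → k0+1
    have hcol : ∀ p ∈ T (k0+1), ∃ i', (i', p.2) ∈ T (k0+1) ∧ σ (i', p.2) = -σ p := by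
      intro p hp
      have hp' : p ∈ TSet A (chain A v k0).1 (psi A (chain A v k0).1) := by
        rw [← hST1]; exact hp
      have hE' : Cerr A (chain A v k0).1 (psi A (chain A v k0).1)
          = Cerr A (chain A v k0).1 (chain A v k0).2 := by
        have e1 : Cerr A (chain A v k0).1 (psi A (chain A v k0).1) = Cerr A (phi A v) v := by
          conv_lhs => rw [← hcv, ← hcu]
          exact hconst (k0+1)
        rw [e1, hconst k0]
      have hpos' : 0 < Cerr A (chain A v k0).1 (chain A v k0).2 := by
        rw [hconst k0]; exact hEpos
      obtain ⟨_, _, i1, i2, hm1, hm2, hs1, hs2⟩ :=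
        psi_analysis A (chain A v k0).1 (chain A v k0).2
          (chain_cheb A v hA hv k0).1 hE' hpos' p hp'
      have hm1' : (i1, p.2) ∈ T (k0+1) := by rw [hST1]; exact hm1
      have hm2' : (i2, p.2) ∈ T (k0+1) := by rw [hST1]; exact hm2
      obtain ⟨ho11, ho12, _⟩ := horig (k0+1) (i1, p.2) hm1'
      obtain ⟨ho21, ho22, _⟩ := horig (k0+1) (i2, p.2) hm2'
      have e1 : (chain A v k0).1 i1 = phi A v i1 := (congrFun hcu i1).symm.trans ho11
      have e1' : (chain A v k0).1 i2 = phi A v i2 := (congrFun hcu i2).symm.trans ho21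
      have e2 : psi A (chain A v k0).1 p.2 = v p.2 := (congrFun hcv p.2).symm.trans ho12
      rw [e1, e2] at hs1
      rw [e1', e2] at hs2
      have hτ1 : σ (i1, p.2) = Real.sign (v p.2) := tau_eq_pos_col A (phi A v) v i1 p.2 hs1
      have hτ2 : σ (i2, p.2) = -Real.sign (v p.2) := tau_eq_neg_col A (phi A v) v i2 p.2 hs2
      have hspm : Real.sign (v p.2) = 1 ∨ Real.sign (v p.2) = -1 := sign_pm _ (hv p.2)
      by_cases hcase : σ p = Real.sign (v p.2)
      · exact ⟨i2, hm2', by rw [hτ2, hcase]⟩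
      · have hh : σ p = -Real.sign (v p.2) := opp_of_ne _ _ (hsig p hp) hspm hcase
        exact ⟨i1, hm1', by rw [hτ1, hh, neg_neg]⟩
    -- row property via the phi step k0+1 → k0+2
    have hrow : ∀ p ∈ T (k0+1), ∃ j', (p.1, j') ∈ T (k0+1) ∧ σ (p.1, j') = -σ p := by
      intro p hp
      have hp2 : p ∈ T (k0+2) := by rw [← hTeq]; exact hp
      have hp' : p ∈ TSet A (phi A (chain A v (k0+1)).2) (chain A v (k0+1)).2 := by
        rw [← hST2]; exact hp2
      have hE' : Cerr A (phi A (chain A v (k0+1)).2) (chain A v (k0+1)).2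
          = Cerr A (chain A v (k0+1)).1 (chain A v (k0+1)).2 := by
        have e1 : Cerr A (phi A (chain A v (k0+1)).2) (chain A v (k0+1)).2
            = Cerr A (phi A v) v := by
          conv_lhs => rw [← hdu, ← hdv]
          exact hconst (k0+2)
        rw [e1, hconst (k0+1)]
      have hpos' : 0 < Cerr A (phi A (chain A v (k0+1)).2) (chain A v (k0+1)).2 := by
        rw [hE', hconst (k0+1)]; exact hEpos
      obtain ⟨_, _, j1, j2, hm1, hm2, hs1, hs2⟩ :=
        phi_analysis A (chain A v (k0+1)).1 (chain A v (k0+1)).2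
          (chain_cheb A v hA hv (k0+1)).2 hE' hpos' p hp'
      have hm1' : (p.1, j1) ∈ T (k0+1) := by rw [hTeq, hST2]; exact hm1
      have hm2' : (p.1, j2) ∈ T (k0+1) := by rw [hTeq, hST2]; exact hm2
      have hm1'' : (p.1, j1) ∈ T (k0+2) := by rw [hST2]; exact hm1
      have hm2'' : (p.1, j2) ∈ T (k0+2) := by rw [hST2]; exact hm2
      obtain ⟨ho11, ho12, _⟩ := horig (k0+2) (p.1, j1) hm1''
      obtain ⟨ho21, ho22, _⟩ := horig (k0+2) (p.1, j2) hm2''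
      have e1 : phi A (chain A v (k0+1)).2 p.1 = phi A v p.1 :=
        (congrFun hdu p.1).symm.trans ho11
      have e2 : (chain A v (k0+1)).2 j1 = v j1 := (congrFun hdv j1).symm.trans ho12
      have e2' : (chain A v (k0+1)).2 j2 = v j2 := (congrFun hdv j2).symm.trans ho22
      rw [e1, e2] at hs1
      rw [e1, e2'] at hs2
      have hτ1 : σ (p.1, j1) = Real.sign (phi A v p.1) :=
        tau_eq_pos_row A (phi A v) v p.1 j1 hs1
      have hτ2 : σ (p.1, j2) = -Real.sign (phi A v p.1) :=
        tau_eq_neg_row A (phi A v) v p.1 j2 hs2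
      have hspm : Real.sign (phi A v p.1) = 1 ∨ Real.sign (phi A v p.1) = -1 :=
        sign_pm _ (hucheb p.1)
      by_cases hcase : σ p = Real.sign (phi A v p.1)
      · exact ⟨j2, hm2', by rw [hτ2, hcase]⟩
      · have hh : σ p = -Real.sign (phi A v p.1) := opp_of_ne _ _ (hsig p hp) hspm hcase
        exact ⟨j1, hm1', by rw [hτ1, hh, neg_neg]⟩
    obtain ⟨k, hk2, r, c, hc0, hdist, hmem, ε, hτ⟩ :=
      graph_lemma (T (k0+1)) σ hSne hsig hrow hcol
    exact ⟨k, hk2, r, c, hc0, hdist,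
      fun s hs => ⟨hSsub (hmem s hs).1, hSsub (hmem s hs).2⟩, ε,
      fun s hs => ⟨(hτ s hs).1, (hτ s hs).2⟩⟩
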